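/- Let G be a group, U a finite-dimensional irreducible complex representation of G carrying a G-invariant nondegenerate alternating bilinear form B_U, and let V = U ⊗ ℂ^m with G acting on the first factor. Then every G-invariant bilinear form on V is of the form B_U ⊗ C for a unique bilinear form C on ℂ^m, and B_U ⊗ C is alternating and nondegenerate if and only if C is symmetric and nondegenerate. Consequently, fixing such a C, the centralizer of the image of G inside Sp(V, B_U ⊗ C) is isomorphic to the orthogonal group O(m, ℂ) of (ℂ^m, C). -/

import Mathlib

open TensorProduct


namespace InvAux

variable {G : Type} [Group G] {U : Type} [AddCommGroup U] [Module ℂ U]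

/-- A representation is irreducible (local copy of hypothesis shape). -/
def IsIrr (ρ : Representation ℂ G U) : Prop :=
  Nontrivial U ∧
    ∀ W : Submodule ℂ U, (∀ g : G, ∀ u ∈ W, ρ g u ∈ W) → W = ⊥ ∨ W = ⊤

lemma exists_dual {u : U} (hu : u ≠ 0) : ∃ f : U →ₗ[ℂ] ℂ, f u = 1 := by
  have h : ¬ ∀ φ : Module.Dual ℂ U, φ u = 0 := by
    rw [Module.forall_dual_apply_eq_zero_iff]; exact hu
  push_neg at h
  obtain ⟨φ, hφ⟩ := h
  refine ⟨(φ u)⁻¹ • φ, ?_⟩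
  simp [inv_mul_cancel₀ hφ]

lemma tmul_cancel {W : Type} [AddCommGroup W] [Module ℂ W] {u : U} (hu : u ≠ 0)
    {w w' : W} (h : u ⊗ₜ[ℂ] w = u ⊗ₜ[ℂ] w') : w = w' := by
  obtain ⟨f, hf⟩ := exists_dual hu
  have h2 := congrArg (fun x => TensorProduct.lid ℂ W (LinearMap.rTensor W f x)) h
  simpa [hf] using h2

lemma schur [FiniteDimensional ℂ U] (ρU : Representation ℂ G U)
    (hirr : Nontrivial U ∧
      ∀ W : Submodule ℂ U, (∀ g : G, ∀ u ∈ W, ρU g u ∈ W) → W = ⊥ ∨ W = ⊤)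
    (φ : U →ₗ[ℂ] U) (hφ : ∀ (g : G) (x : U), φ (ρU g x) = ρU g (φ x)) :
    ∃ c : ℂ, ∀ x, φ x = c • x := by
  obtain ⟨hnt, hsub⟩ := hirr
  haveI := hnt
  obtain ⟨c, hc⟩ := Module.End.exists_eigenvalue (φ : Module.End ℂ U)
  refine ⟨c, ?_⟩
  have hWinv : ∀ g : G, ∀ u ∈ Module.End.eigenspace (φ : Module.End ℂ U) c,
      ρU g u ∈ Module.End.eigenspace (φ : Module.End ℂ U) c := by
    intro g u hu
    rw [Module.End.mem_eigenspace_iff] at hu ⊢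
    show φ (ρU g u) = c • ρU g u
    rw [hφ, hu, map_smul]
  rcases hsub _ hWinv with h | h
  · exact absurd h (Module.End.hasEigenvalue_iff.mp hc)
  · intro x
    have hx : x ∈ Module.End.eigenspace (φ : Module.End ℂ U) c :=
      h ▸ Submodule.mem_top
    exact Module.End.mem_eigenspace_iff.mp hx

lemma inv_form_scalar [FiniteDimensional ℂ U] (ρU : Representation ℂ G U)
    (hirr : Nontrivial U ∧
      ∀ W : Submodule ℂ U, (∀ g : G, ∀ u ∈ W, ρU g u ∈ W) → W = ⊥ ∨ W = ⊤)
    (BU : LinearMap.BilinForm ℂ U)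
    (hinv : ∀ (g : G) (x y : U), BU (ρU g x) (ρU g y) = BU x y)
    (hnd : BU.Nondegenerate)
    (B' : LinearMap.BilinForm ℂ U)
    (hB' : ∀ (g : G) (x y : U), B' (ρU g x) (ρU g y) = B' x y) :
    ∃ c : ℂ, ∀ x y, B' x y = c * BU x y := by
  have hcanc : ∀ (g : G) (y : U), ρU g (ρU g⁻¹ y) = y := by
    intro g y
    have h1 : (ρU g * ρU g⁻¹) y = (1 : U →ₗ[ℂ] U) y := by
      rw [← map_mul, mul_inv_cancel, map_one]
    simpa using h1
  have hinj : Function.Injective (BU : U →ₗ[ℂ] U →ₗ[ℂ] ℂ) := by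
    intro x y hxy
    have hz : ∀ z, BU (x - y) z = 0 := by
      intro z
      rw [map_sub, LinearMap.sub_apply, hxy, sub_self]
    have := hnd.1 _ hz
    exact sub_eq_zero.mp this
  have hsurj : Function.Surjective (BU : U →ₗ[ℂ] U →ₗ[ℂ] ℂ) := by
    have hfr : Module.finrank ℂ U = Module.finrank ℂ (U →ₗ[ℂ] ℂ) :=
      (Subspace.dual_finrank_eq (K := ℂ) (V := U)).symm
    exact (LinearMap.injective_iff_surjective_of_finrank_eq_finrank hfr).mp hinj
  let e : U ≃ₗ[ℂ] (U →ₗ[ℂ] ℂ) := LinearEquiv.ofBijective BU ⟨hinj, hsurj⟩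
  let T : U →ₗ[ℂ] U := e.symm.toLinearMap ∘ₗ B'
  have hT : ∀ x, BU (T x) = B' x := by
    intro x
    show e (e.symm (B' x)) = B' x
    exact e.apply_symm_apply (B' x)
  have hBUinv' : ∀ (g : G) (a y : U), BU (ρU g a) y = BU a (ρU g⁻¹ y) := by
    intro g a y
    conv_lhs => rw [← hcanc g y]
    rw [hinv]
  have hB'inv' : ∀ (g : G) (a y : U), B' (ρU g a) y = B' a (ρU g⁻¹ y) := by
    intro g a y
    conv_lhs => rw [← hcanc g y]
    rw [hB']
  have hTequiv : ∀ (g : G) (x : U), T (ρU g x) = ρU g (T x) := by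
    intro g x
    apply hinj
    ext y
    rw [hT]
    calc B' (ρU g x) y = B' x (ρU g⁻¹ y) := hB'inv' g x y
    _ = BU (T x) (ρU g⁻¹ y) := by rw [hT]
    _ = BU (ρU g (T x)) y := (hBUinv' g (T x) y).symm
  obtain ⟨c, hc⟩ := schur ρU hirr T hTequiv
  refine ⟨c, fun x y => ?_⟩
  have h1 : BU (T x) y = B' x y := by rw [hT]
  rw [← h1, hc x, map_smul]
  simp

end InvAux


namespace InvAux2

variable {U : Type} [AddCommGroup U] [Module ℂ U] {m : ℕ}

/-- Projection onto the `i`-th component of `U ⊗ ℂ^m`. -/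
noncomputable def pr (U : Type) [AddCommGroup U] [Module ℂ U] (m : ℕ) (i : Fin m) :
    (U ⊗[ℂ] (Fin m → ℂ)) →ₗ[ℂ] U :=
  (TensorProduct.rid ℂ U).toLinearMap ∘ₗ LinearMap.lTensor U (LinearMap.proj i)

@[simp] lemma pr_tmul (i : Fin m) (u : U) (w : Fin m → ℂ) :
    pr U m i (u ⊗ₜ[ℂ] w) = w i • u := by
  simp [pr]

lemma pr_rTensor (f : U →ₗ[ℂ] U) (i : Fin m) (x : U ⊗[ℂ] (Fin m → ℂ)) :
    pr U m i (LinearMap.rTensor (Fin m → ℂ) f x) = f (pr U m i x) := by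
  induction x using TensorProduct.induction_on with
  | zero => simp
  | tmul u w => simp [map_smul]
  | add x y hx hy => simp [map_add, hx, hy]

lemma sum_single_tmul (u : U) (a : Fin m → ℂ) :
    ∑ i, (a i • u) ⊗ₜ[ℂ] (Pi.single i (1 : ℂ)) = u ⊗ₜ[ℂ] a := by
  have h : ∀ i : Fin m, (a i • u) ⊗ₜ[ℂ] (Pi.single i (1 : ℂ))
      = u ⊗ₜ[ℂ] (Pi.single i (a i) : Fin m → ℂ) := by
    intro i
    rw [TensorProduct.smul_tmul]
    congr 1
    ext k
    simp [Pi.single_apply, eq_comm]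
  rw [Finset.sum_congr rfl fun i _ => h i, ← TensorProduct.tmul_sum,
    Finset.univ_sum_single]

lemma reconstruct (x : U ⊗[ℂ] (Fin m → ℂ)) :
    x = ∑ i, (pr U m i x) ⊗ₜ[ℂ] (Pi.single i (1 : ℂ)) := by
  induction x using TensorProduct.induction_on with
  | zero => simp
  | tmul u w =>
    simp only [pr_tmul]
    exact (sum_single_tmul u w).symm
  | add x y hx hy =>
    conv_lhs => rw [hx, hy]
    simp [map_add, TensorProduct.add_tmul, Finset.sum_add_distrib]

lemma map_ext {M : Type} [AddCommGroup M] [Module ℂ M]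
    {F₁ F₂ : (U ⊗[ℂ] (Fin m → ℂ)) →ₗ[ℂ] M}
    (h : ∀ (u : U) (j : Fin m),
      F₁ (u ⊗ₜ[ℂ] Pi.single j 1) = F₂ (u ⊗ₜ[ℂ] Pi.single j 1)) :
    ∀ x, F₁ x = F₂ x := by
  intro x
  rw [reconstruct x, map_sum, map_sum]
  exact Finset.sum_congr rfl fun j _ => h _ j

lemma bilin_ext {B₁ B₂ : LinearMap.BilinForm ℂ (U ⊗[ℂ] (Fin m → ℂ))}
    (h : ∀ (u v : U) (i j : Fin m),
      B₁ (u ⊗ₜ[ℂ] Pi.single i 1) (v ⊗ₜ[ℂ] Pi.single j 1)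
        = B₂ (u ⊗ₜ[ℂ] Pi.single i 1) (v ⊗ₜ[ℂ] Pi.single j 1)) :
    ∀ x y, B₁ x y = B₂ x y := by
  intro x y
  rw [reconstruct x, reconstruct y]
  simp only [map_sum, LinearMap.sum_apply]
  exact Finset.sum_congr rfl fun i _ => Finset.sum_congr rfl fun j _ => h _ _ _ _

lemma tmul_apply (BU : LinearMap.BilinForm ℂ U) (C : LinearMap.BilinForm ℂ (Fin m → ℂ))
    (u v : U) (w w' : Fin m → ℂ) :
    BU.tmul C (u ⊗ₜ[ℂ] w) (v ⊗ₜ[ℂ] w') = BU u v * C w w' := by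
  calc BU.tmul C (u ⊗ₜ[ℂ] w) (v ⊗ₜ[ℂ] w') = C w w' • BU u v := rfl
  _ = BU u v * C w w' := by rw [smul_eq_mul, mul_comm]

lemma pi_expand (w : Fin m → ℂ) : w = ∑ i, w i • (Pi.single i (1 : ℂ) : Fin m → ℂ) := by
  have h : ∀ i : Fin m, w i • (Pi.single i (1 : ℂ) : Fin m → ℂ) = Pi.single i (w i) := by
    intro i
    ext k
    simp [Pi.single_apply, eq_comm]
  rw [Finset.sum_congr rfl fun i _ => h i, Finset.univ_sum_single]

end InvAux2

open InvAux InvAux2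



/-- The subgroup of linear automorphisms of `M` preserving a bilinear form `B`. -/
def formPreserver {M : Type} [AddCommGroup M] [Module ℂ M]
    (B : LinearMap.BilinForm ℂ M) : Subgroup (M ≃ₗ[ℂ] M) where
  carrier := {g | ∀ x y : M, B (g x) (g y) = B x y}
  one_mem' := by intro x y; rfl
  mul_mem' := by
    intro a b ha hb x y
    have h1 : (a * b) x = a (b x) := rfl
    have h2 : (a * b) y = a (b y) := rfl
    rw [h1, h2, ha, hb]
  inv_mem' := by
    intro a ha x y
    have h := ha (a⁻¹ x) (a⁻¹ y)
    have e1 : a (a⁻¹ x) = x := a.apply_symm_apply x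
    have e2 : a (a⁻¹ y) = y := a.apply_symm_apply y
    rw [e1, e2] at h
    exact h.symm

/-- The subgroup of linear automorphisms of `M` commuting with a family of
endomorphisms `ρ`. -/
def commutant {M : Type} [AddCommGroup M] [Module ℂ M] {G : Type}
    (ρ : G → (M →ₗ[ℂ] M)) : Subgroup (M ≃ₗ[ℂ] M) where
  carrier := {g | ∀ (h : G) (x : M), g (ρ h x) = ρ h (g x)}
  one_mem' := by intro h x; rfl
  mul_mem' := by
    intro a b ha hb h x
    have h1 : (a * b) (ρ h x) = a (b (ρ h x)) := rfl
    have h2 : (a * b) x = a (b x) := rfl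
    rw [h1, h2, hb, ha]
  inv_mem' := by
    intro a ha h x
    have e1 : a (a⁻¹ x) = x := a.apply_symm_apply x
    have key : a (ρ h (a⁻¹ x)) = ρ h x := by
      rw [ha h (a⁻¹ x), e1]
    have e2 : a⁻¹ (a (ρ h (a⁻¹ x))) = ρ h (a⁻¹ x) :=
      a.symm_apply_apply _
    rw [← key, e2]

/-- A representation is irreducible if the underlying space is nontrivial and the only
invariant subspaces are `⊥` and `⊤`. -/
def IsIrreducibleRep {G : Type} [Group G] {U : Type} [AddCommGroup U] [Module ℂ U]
    (ρ : Representation ℂ G U) : Prop :=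
  Nontrivial U ∧
    ∀ W : Submodule ℂ U, (∀ g : G, ∀ u ∈ W, ρ g u ∈ W) → W = ⊥ ∨ W = ⊤

/-- Let `U` be an irreducible representation of `G` carrying an invariant nondegenerate
alternating form `B_U`, and let `V = U ⊗ ℂ^m` with `G` acting on the first factor.
Then: every `G`-invariant bilinear form on `V` equals `B_U ⊗ C` for a unique bilinear
form `C` on `ℂ^m`; `B_U ⊗ C` is alternating and nondegenerate iff `C` is symmetric and
nondegenerate; and in that case the centralizer of the image of `G` in
`Sp(V, B_U ⊗ C)` is isomorphic to the orthogonal group of `(ℂ^m, C)`. -/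
theorem invariant_forms_on_isotypic_and_centralizer
    (G : Type) [Group G] (U : Type) [AddCommGroup U] [Module ℂ U]
    [FiniteDimensional ℂ U]
    (ρU : Representation ℂ G U) (hirr : IsIrreducibleRep ρU)
    (BU : LinearMap.BilinForm ℂ U)
    (hinv : ∀ (g : G) (x y : U), BU (ρU g x) (ρU g y) = BU x y)
    (halt : BU.IsAlt) (hnd : BU.Nondegenerate) (m : ℕ) :
    (∀ B : LinearMap.BilinForm ℂ (U ⊗[ℂ] (Fin m → ℂ)),
      (∀ (g : G) (x y : U ⊗[ℂ] (Fin m → ℂ)),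
        B (LinearMap.rTensor (Fin m → ℂ) (ρU g) x)
          (LinearMap.rTensor (Fin m → ℂ) (ρU g) y) = B x y) →
      ∃! C : LinearMap.BilinForm ℂ (Fin m → ℂ), B = BU.tmul C) ∧
    (∀ C : LinearMap.BilinForm ℂ (Fin m → ℂ),
      ((BU.tmul C).IsAlt ∧ (BU.tmul C).Nondegenerate) ↔
        (C.IsSymm ∧ C.Nondegenerate)) ∧
    (∀ C : LinearMap.BilinForm ℂ (Fin m → ℂ), C.IsSymm → C.Nondegenerate →
      Nonempty
        ((formPreserver (BU.tmul C) ⊓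
            commutant (fun g : G => LinearMap.rTensor (Fin m → ℂ) (ρU g)) :
          Subgroup ((U ⊗[ℂ] (Fin m → ℂ)) ≃ₗ[ℂ] (U ⊗[ℂ] (Fin m → ℂ)))) ≃*
          formPreserver C)) := by
  classical
  obtain ⟨hnt, hsubmod⟩ := hirr
  haveI := hnt
  obtain ⟨u₀, hu₀⟩ := exists_ne (0 : U)
  have hv₀ : ∃ v₀ : U, BU u₀ v₀ ≠ 0 := by
    by_contra hcon
    push_neg at hcon
    exact hu₀ (hnd.1 u₀ hcon)
  obtain ⟨v₀, hne⟩ := hv₀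
  refine ⟨?_, ?_, ?_⟩
  · -- Part 1
    intro B hB
    have hform : ∀ i j : Fin m, ∃ cc : ℂ, ∀ u v : U,
        B (u ⊗ₜ[ℂ] (Pi.single i 1 : Fin m → ℂ)) (v ⊗ₜ[ℂ] (Pi.single j 1 : Fin m → ℂ))
          = cc * BU u v := by
      intro i j
      obtain ⟨cc, hcc⟩ := inv_form_scalar ρU ⟨hnt, hsubmod⟩ BU hinv hnd
        (B.compl₁₂ ((TensorProduct.mk ℂ U (Fin m → ℂ)).flip (Pi.single i 1))
                   ((TensorProduct.mk ℂ U (Fin m → ℂ)).flip (Pi.single j 1)))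
        (by
          intro g u v
          simp only [LinearMap.compl₁₂_apply, LinearMap.flip_apply,
            TensorProduct.mk_apply]
          rw [show (ρU g u) ⊗ₜ[ℂ] (Pi.single i 1 : Fin m → ℂ)
              = LinearMap.rTensor (Fin m → ℂ) (ρU g) (u ⊗ₜ[ℂ] (Pi.single i 1 : Fin m → ℂ))
              from (LinearMap.rTensor_tmul _ _ _ _).symm,
            show (ρU g v) ⊗ₜ[ℂ] (Pi.single j 1 : Fin m → ℂ)
              = LinearMap.rTensor (Fin m → ℂ) (ρU g) (v ⊗ₜ[ℂ] (Pi.single j 1 : Fin m → ℂ))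
              from (LinearMap.rTensor_tmul _ _ _ _).symm]
          exact hB g _ _)
      refine ⟨cc, fun u v => ?_⟩
      have h := hcc u v
      simpa only [LinearMap.compl₁₂_apply, LinearMap.flip_apply,
        TensorProduct.mk_apply] using h
    choose cmat hcmat using hform
    set C : LinearMap.BilinForm ℂ (Fin m → ℂ) :=
      Matrix.toLinearMap₂' ℂ (Matrix.of cmat) with hCdef
    have hCval : ∀ i j : Fin m, C (Pi.single i 1) (Pi.single j 1) = cmat i j := by
      intro i j
      rw [hCdef]
      rw [Matrix.toLinearMap₂'_apply']
      simp [Matrix.mulVec_single, dotProduct, Pi.single_apply, ite_mul]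
    have hBC : B = BU.tmul C := by
      refine LinearMap.ext fun x => LinearMap.ext fun y => ?_
      refine bilin_ext (fun u v i j => ?_) x y
      rw [tmul_apply, hcmat i j u v, hCval i j, mul_comm]
    refine ⟨C, hBC, ?_⟩
    intro C' hC'
    have heq : BU.tmul C' = BU.tmul C := hC'.symm.trans hBC
    refine LinearMap.ext fun w => LinearMap.ext fun w' => ?_
    have h := congrArg (fun Bf : LinearMap.BilinForm ℂ (U ⊗[ℂ] (Fin m → ℂ)) =>
      Bf (u₀ ⊗ₜ[ℂ] w) (v₀ ⊗ₜ[ℂ] w')) heq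
    rw [tmul_apply, tmul_apply] at h
    exact mul_left_cancel₀ hne h
  · -- Part 2
    intro C
    constructor
    · rintro ⟨halt', hnd'⟩
      constructor
      · -- C is symmetric
        refine ⟨fun w w' => ?_⟩
        have h1 := LinearMap.IsAlt.neg halt' (u₀ ⊗ₜ[ℂ] w) (v₀ ⊗ₜ[ℂ] w')
        rw [tmul_apply, tmul_apply] at h1
        have h2 : BU v₀ u₀ = -(BU u₀ v₀) := (LinearMap.IsAlt.neg halt u₀ v₀).symm
        rw [h2] at h1
        have h3 : BU u₀ v₀ * C w w' = BU u₀ v₀ * C w' w := by linear_combination -h1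
        simpa using mul_left_cancel₀ hne h3
      · -- C is nondegenerate
        refine ⟨fun w hw => ?_, fun w hw => ?_⟩
        have hx : ∀ y, (BU.tmul C) (u₀ ⊗ₜ[ℂ] w) y = 0 := by
          intro y
          induction y using TensorProduct.induction_on with
          | zero => simp
          | tmul v w' => rw [tmul_apply, hw w', mul_zero]
          | add a b ha hb => rw [map_add, ha, hb, add_zero]
        have h0 := hnd'.1 _ hx
        exact tmul_cancel hu₀ (h0.trans (TensorProduct.tmul_zero _ u₀).symm)
        have hx' : ∀ y, (BU.tmul C) y (u₀ ⊗ₜ[ℂ] w) = 0 := by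
          intro y
          induction y using TensorProduct.induction_on with
          | zero => simp
          | tmul v w' => rw [tmul_apply, hw w', mul_zero]
          | add a b ha hb => rw [map_add, LinearMap.add_apply, ha, hb, add_zero]
        have h0 := hnd'.2 _ hx'
        exact tmul_cancel hu₀ (h0.trans (TensorProduct.tmul_zero _ u₀).symm)
    · rintro ⟨hsymm, hCnd⟩
      have hskew : ∀ x y, (BU.tmul C) x y + (BU.tmul C) y x = 0 := by
        have hb := bilin_ext
          (B₁ := BU.tmul C + (BU.tmul C).flip) (B₂ := (0 : LinearMap.BilinForm ℂ (U ⊗[ℂ] (Fin m → ℂ))))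
          (by
            intro u v i j
            simp only [LinearMap.add_apply, LinearMap.flip_apply, LinearMap.zero_apply]
            rw [tmul_apply, tmul_apply]
            have h2 : BU v u = -(BU u v) := (LinearMap.IsAlt.neg halt u v).symm
            have h3 : C (Pi.single j 1) (Pi.single i 1) = C (Pi.single i 1) (Pi.single j 1) := by
              have := hsymm.eq (Pi.single i (1:ℂ)) (Pi.single j (1:ℂ))
              simpa using this.symm
            rw [h2, h3]
            ring)
        intro x y
        have h := hb x y
        simpa only [LinearMap.add_apply, LinearMap.flip_apply, LinearMap.zero_apply] using h
      have hsepl : ∀ x : U ⊗[ℂ] (Fin m → ℂ),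
          (∀ y, (BU.tmul C) x y = 0) → x = 0 := by
        intro x hx
        have hΘinj : Function.Injective
            (LinearMap.pi (fun i : Fin m => C (Pi.single i 1)) :
              (Fin m → ℂ) →ₗ[ℂ] (Fin m → ℂ)) := by
          rw [injective_iff_map_eq_zero]
          intro w hw
          apply hCnd.1
          intro w'
          have hcomp : ∀ i : Fin m, C (Pi.single i 1) w = 0 := by
            intro i
            have := congrFun hw i
            simpa [LinearMap.pi_apply] using this
          have hCw'w : C w' w = 0 := by
            conv_lhs => rw [pi_expand w']
            rw [map_sum, LinearMap.sum_apply]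
            refine Finset.sum_eq_zero fun i _ => ?_
            rw [map_smul, LinearMap.smul_apply, hcomp i, smul_zero]
          have := hsymm.eq w' w
          rw [← this, hCw'w]
        have hΘsurj := LinearMap.injective_iff_surjective.mp hΘinj
        have hcomp0 : ∀ j : Fin m, pr U m j x = 0 := by
          intro j
          obtain ⟨wj, hwj⟩ := hΘsurj (Pi.single j 1)
          have hval : ∀ i : Fin m, C (Pi.single i 1) wj = if i = j then 1 else 0 := by
            intro i
            have := congrFun hwj i
            simpa [LinearMap.pi_apply, Pi.single_apply] using this
          apply hnd.1
          intro v
          have h := hx (v ⊗ₜ[ℂ] wj)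
          rw [reconstruct x] at h
          simp only [map_sum, LinearMap.sum_apply] at h
          have h2 : ∀ i : Fin m,
              (BU.tmul C) ((pr U m i x) ⊗ₜ[ℂ] (Pi.single i 1 : Fin m → ℂ)) (v ⊗ₜ[ℂ] wj)
                = if i = j then BU (pr U m i x) v else 0 := by
            intro i
            rw [tmul_apply, hval i]
            by_cases hij : i = j <;> simp [hij]
          rw [Finset.sum_congr rfl fun i _ => h2 i, Finset.sum_ite_eq' Finset.univ j] at h
          simpa using h
        rw [reconstruct x]
        refine Finset.sum_eq_zero fun i _ => ?_
        rw [hcomp0 i, TensorProduct.zero_tmul]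
      refine ⟨?_, hsepl, ?_⟩
      · -- alternating
        intro x
        have h := hskew x x
        have h2 : (2 : ℂ) * ((BU.tmul C) x x) = 0 := by linear_combination h
        exact (mul_eq_zero.mp h2).resolve_left two_ne_zero
      · -- right separating
        intro y hy
        refine hsepl y fun x => ?_
        have h := hskew y x
        rw [hy x, add_zero] at h
        exact h
  · -- Part 3
    intro C hCs hCnd
    -- the inclusion of form-preservers of C into the centralizer
    have hpres : ∀ A : (Fin m → ℂ) ≃ₗ[ℂ] (Fin m → ℂ), A ∈ formPreserver C →
        TensorProduct.congr (LinearEquiv.refl ℂ U) A ∈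
          (formPreserver (BU.tmul C) ⊓
            commutant (fun g : G => LinearMap.rTensor (Fin m → ℂ) (ρU g))) := by
      intro A hA
      have hA' : ∀ w w' : Fin m → ℂ, C (A w) (A w') = C w w' := hA
      rw [Subgroup.mem_inf]
      constructor
      · show ∀ x y : U ⊗[ℂ] (Fin m → ℂ),
          (BU.tmul C) (TensorProduct.congr (LinearEquiv.refl ℂ U) A x)
            (TensorProduct.congr (LinearEquiv.refl ℂ U) A y) = (BU.tmul C) x y
        have hb := bilin_ext
          (B₁ := (BU.tmul C).compl₁₂
            (TensorProduct.congr (LinearEquiv.refl ℂ U) A).toLinearMap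
            (TensorProduct.congr (LinearEquiv.refl ℂ U) A).toLinearMap)
          (B₂ := BU.tmul C)
          (by
            intro u v i j
            simp only [LinearMap.compl₁₂_apply, LinearEquiv.coe_coe,
              TensorProduct.congr_tmul, LinearEquiv.refl_apply]
            rw [tmul_apply, tmul_apply, hA'])
        intro x y
        have h := hb x y
        simpa only [LinearMap.compl₁₂_apply, LinearEquiv.coe_coe] using h
      · show ∀ (h : G) (x : U ⊗[ℂ] (Fin m → ℂ)),
          TensorProduct.congr (LinearEquiv.refl ℂ U) A
              (LinearMap.rTensor (Fin m → ℂ) (ρU h) x)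
            = LinearMap.rTensor (Fin m → ℂ) (ρU h)
              (TensorProduct.congr (LinearEquiv.refl ℂ U) A x)
        intro h x
        induction x using TensorProduct.induction_on with
        | zero => simp
        | tmul u w => simp [TensorProduct.congr_tmul]
        | add a b ha hb => simp only [map_add, ha, hb]
    let f : ↥(formPreserver C) →
        ↥(formPreserver (BU.tmul C) ⊓
          commutant (fun g : G => LinearMap.rTensor (Fin m → ℂ) (ρU g))) :=
      fun A => ⟨TensorProduct.congr (LinearEquiv.refl ℂ U) A.1, hpres A.1 A.2⟩
    have hmul : ∀ a b : ↥(formPreserver C), f (a * b) = f a * f b := by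
      intro a b
      apply Subtype.ext
      show TensorProduct.congr (LinearEquiv.refl ℂ U) (a.1 * b.1)
        = TensorProduct.congr (LinearEquiv.refl ℂ U) a.1
          * TensorProduct.congr (LinearEquiv.refl ℂ U) b.1
      apply LinearEquiv.toLinearMap_injective
      apply TensorProduct.ext'
      intro u w
      show TensorProduct.congr (LinearEquiv.refl ℂ U) (a.1 * b.1) (u ⊗ₜ[ℂ] w)
        = TensorProduct.congr (LinearEquiv.refl ℂ U) a.1
            (TensorProduct.congr (LinearEquiv.refl ℂ U) b.1 (u ⊗ₜ[ℂ] w))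
      simp only [TensorProduct.congr_tmul, LinearEquiv.refl_apply]
      rfl
    have hinj : Function.Injective f := by
      intro A A' h
      refine Subtype.ext (LinearEquiv.ext fun w => ?_)
      have h1 : TensorProduct.congr (LinearEquiv.refl ℂ U) A.1
          = TensorProduct.congr (LinearEquiv.refl ℂ U) A'.1 :=
        congrArg Subtype.val h
      have h2 := DFunLike.congr_fun h1 (u₀ ⊗ₜ[ℂ] w)
      simp only [TensorProduct.congr_tmul, LinearEquiv.refl_apply] at h2
      exact tmul_cancel hu₀ h2
    have hsurj : ∀ gg : ↥(formPreserver (BU.tmul C) ⊓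
        commutant (fun g : G => LinearMap.rTensor (Fin m → ℂ) (ρU g))),
        ∃ A : ↥(formPreserver C), f A = gg := by
      rintro ⟨g, hg⟩
      have hg1 : ∀ x y : U ⊗[ℂ] (Fin m → ℂ),
          (BU.tmul C) (g x) (g y) = (BU.tmul C) x y := (Subgroup.mem_inf.mp hg).1
      have hg2 : ∀ (h : G) (x : U ⊗[ℂ] (Fin m → ℂ)),
          g (LinearMap.rTensor (Fin m → ℂ) (ρU h) x)
            = LinearMap.rTensor (Fin m → ℂ) (ρU h) (g x) := (Subgroup.mem_inf.mp hg).2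
      have hc : ∀ i j : Fin m, ∃ cc : ℂ, ∀ u : U,
          pr U m i (g (u ⊗ₜ[ℂ] (Pi.single j 1 : Fin m → ℂ))) = cc • u := by
        intro i j
        obtain ⟨cc, hcc⟩ := schur ρU ⟨hnt, hsubmod⟩
          (pr U m i ∘ₗ (g.toLinearMap ∘ₗ
            ((TensorProduct.mk ℂ U (Fin m → ℂ)).flip (Pi.single j 1))))
          (by
            intro h u
            simp only [LinearMap.coe_comp, Function.comp_apply, LinearMap.flip_apply,
              TensorProduct.mk_apply, LinearEquiv.coe_coe]
            rw [show (ρU h u) ⊗ₜ[ℂ] (Pi.single j 1 : Fin m → ℂ)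
                = LinearMap.rTensor (Fin m → ℂ) (ρU h)
                    (u ⊗ₜ[ℂ] (Pi.single j 1 : Fin m → ℂ))
                from (LinearMap.rTensor_tmul _ _ _ _).symm,
              hg2 h, pr_rTensor])
        refine ⟨cc, fun u => ?_⟩
        have h := hcc u
        simpa only [LinearMap.coe_comp, Function.comp_apply, LinearMap.flip_apply,
          TensorProduct.mk_apply, LinearEquiv.coe_coe] using h
      choose cmat2 hcmat2 using hc
      set A₀ : (Fin m → ℂ) →ₗ[ℂ] (Fin m → ℂ) := (Matrix.of cmat2).mulVecLin with hA₀def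
      have hA₀e : ∀ j : Fin m, A₀ (Pi.single j 1) = fun i => cmat2 i j := by
        intro j
        rw [hA₀def]
        ext i
        simp [Matrix.mulVecLin_apply, Matrix.mulVec_single]
      have hkey : ∀ (u : U) (j : Fin m),
          g (u ⊗ₜ[ℂ] (Pi.single j 1 : Fin m → ℂ)) = u ⊗ₜ[ℂ] A₀ (Pi.single j 1) := by
        intro u j
        calc g (u ⊗ₜ[ℂ] (Pi.single j 1 : Fin m → ℂ))
            = ∑ i, (pr U m i (g (u ⊗ₜ[ℂ] (Pi.single j 1 : Fin m → ℂ))))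
                ⊗ₜ[ℂ] (Pi.single i (1 : ℂ) : Fin m → ℂ) := reconstruct _
          _ = ∑ i, ((cmat2 i j) • u) ⊗ₜ[ℂ] (Pi.single i (1 : ℂ) : Fin m → ℂ) := by
              refine Finset.sum_congr rfl fun i _ => ?_
              rw [hcmat2 i j u]
          _ = u ⊗ₜ[ℂ] (fun i => cmat2 i j) := sum_single_tmul u (fun i => cmat2 i j)
          _ = u ⊗ₜ[ℂ] A₀ (Pi.single j 1) := by rw [hA₀e j]
      have hng : ∀ x, g x = LinearMap.lTensor U A₀ x := by
        refine map_ext (F₁ := (g : (U ⊗[ℂ] (Fin m → ℂ)) →ₗ[ℂ] (U ⊗[ℂ] (Fin m → ℂ))))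
          (F₂ := LinearMap.lTensor U A₀) ?_
        intro u j
        rw [LinearMap.lTensor_tmul]
        exact hkey u j
      have hA₀inj : Function.Injective A₀ := by
        rw [injective_iff_map_eq_zero]
        intro w hw
        have h1 : g (u₀ ⊗ₜ[ℂ] w) = 0 := by
          rw [hng, LinearMap.lTensor_tmul, hw, TensorProduct.tmul_zero]
        have h2 : u₀ ⊗ₜ[ℂ] w = 0 := (LinearEquiv.map_eq_zero_iff g).mp h1
        exact tmul_cancel hu₀ (h2.trans (TensorProduct.tmul_zero _ u₀).symm)
      have hA₀surj := LinearMap.injective_iff_surjective.mp hA₀inj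
      have hAmem : LinearEquiv.ofBijective A₀ ⟨hA₀inj, hA₀surj⟩ ∈ formPreserver C := by
        show ∀ w w' : Fin m → ℂ,
          C (LinearEquiv.ofBijective A₀ ⟨hA₀inj, hA₀surj⟩ w)
            (LinearEquiv.ofBijective A₀ ⟨hA₀inj, hA₀surj⟩ w') = C w w'
        intro w w'
        have h1 := hg1 (u₀ ⊗ₜ[ℂ] w) (v₀ ⊗ₜ[ℂ] w')
        rw [hng (u₀ ⊗ₜ[ℂ] w), hng (v₀ ⊗ₜ[ℂ] w'), LinearMap.lTensor_tmul,
          LinearMap.lTensor_tmul, tmul_apply, tmul_apply] at h1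
        exact mul_left_cancel₀ hne h1
      refine ⟨⟨LinearEquiv.ofBijective A₀ ⟨hA₀inj, hA₀surj⟩, hAmem⟩, ?_⟩
      apply Subtype.ext
      show TensorProduct.congr (LinearEquiv.refl ℂ U)
        (LinearEquiv.ofBijective A₀ ⟨hA₀inj, hA₀surj⟩) = g
      apply LinearEquiv.toLinearMap_injective
      apply LinearMap.ext
      intro x
      refine map_ext (F₁ := (TensorProduct.congr (LinearEquiv.refl ℂ U)
          (LinearEquiv.ofBijective A₀ ⟨hA₀inj, hA₀surj⟩)).toLinearMap)
        (F₂ := (g : (U ⊗[ℂ] (Fin m → ℂ)) →ₗ[ℂ] (U ⊗[ℂ] (Fin m → ℂ)))) ?_ x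
      intro u j
      have h1 : TensorProduct.congr (LinearEquiv.refl ℂ U)
          (LinearEquiv.ofBijective A₀ ⟨hA₀inj, hA₀surj⟩)
          (u ⊗ₜ[ℂ] (Pi.single j 1 : Fin m → ℂ)) = u ⊗ₜ[ℂ] A₀ (Pi.single j 1) := by
        simp only [TensorProduct.congr_tmul, LinearEquiv.refl_apply]
        rfl
      show TensorProduct.congr (LinearEquiv.refl ℂ U)
          (LinearEquiv.ofBijective A₀ ⟨hA₀inj, hA₀surj⟩)
          (u ⊗ₜ[ℂ] (Pi.single j 1 : Fin m → ℂ))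
        = g (u ⊗ₜ[ℂ] (Pi.single j 1 : Fin m → ℂ))
      rw [h1, hkey u j]
    exact ⟨MulEquiv.symm
      { toFun := f
        invFun := fun gg => Classical.choose (hsurj gg)
        left_inv := fun A => hinj (Classical.choose_spec (hsurj (f A)))
        right_inv := fun gg => Classical.choose_spec (hsurj gg)
        map_mul' := hmul }⟩
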